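/- Let z ∈ ℂ, ρ > 0 and α ∈ S¹ satisfy |z| + ρ < 1. Then the map S¹ × [0,1] → ℂ given by (θ, r) ↦ (1−r)(z + ρ α θ) + r α θ is a homeomorphism onto the annular region {w ∈ ℂ : |w| ≤ 1 and |w − z| ≥ ρ}. -/

import Mathlib

/-- For a single framed little disc (centre `z`, radius `ρ`, framing `α`) strictly inside
the unit disc, the map `S¹ × [0,1] → ℂ`, `(θ, r) ↦ (1−r)(z + ραθ) + rαθ`, is a
homeomorphism onto the annular region `{w : |w| ≤ 1, |w − z| ≥ ρ}`. -/
theorem annulus_parametrization_isEmbedding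
    (z α : ℂ) (ρ : ℝ) (hρ : 0 < ρ) (hα : ‖α‖ = 1)
    (hin : ‖z‖ + ρ < 1)
    (f : ↥(Metric.sphere (0 : ℂ) 1) × ↥(Set.Icc (0 : ℝ) 1) → ℂ)
    (hf : ∀ (θ : ↥(Metric.sphere (0 : ℂ) 1)) (r : ↥(Set.Icc (0 : ℝ) 1)),
      f (θ, r) = (1 - ((r : ℝ) : ℂ)) * (z + (ρ : ℂ) * α * (θ : ℂ)) +
        ((r : ℝ) : ℂ) * α * (θ : ℂ)) :
    Topology.IsEmbedding f ∧
      Set.range f = {w : ℂ | ‖w‖ ≤ 1 ∧ ρ ≤ ‖(w - z)‖} := by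
  have hzabs : (0:ℝ) ≤ ‖z‖ := norm_nonneg z
  have hz : ‖z‖ < 1 - ρ := by linarith
  have hρ1 : ρ < 1 := by linarith
  have hα0 : α ≠ 0 := by
    intro h; rw [h] at hα; simp at hα
  -- f in a convenient form
  have hkey : ∀ (θ : ↥(Metric.sphere (0:ℂ) 1)) (r : ↥(Set.Icc (0:ℝ) 1)),
      f (θ, r) = (1 - ((r:ℝ):ℂ))*z + (((ρ + (r:ℝ)*(1-ρ)) : ℝ):ℂ)*α*(θ:ℂ) := by
    intro θ r; rw [hf]; push_cast; ring
  have habsθ : ∀ θ : ↥(Metric.sphere (0:ℂ) 1), ‖(θ:ℂ)‖ = 1 := by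
    intro θ
    have := θ.2
    rwa [mem_sphere_zero_iff_norm] at this
  -- modulus of the scaled term
  have habs : ∀ (s : ℝ) (θ : ↥(Metric.sphere (0:ℂ) 1)),
      ‖((s:ℂ)*α*(θ:ℂ))‖ = |s| := by
    intro s θ
    rw [norm_mul, norm_mul, hα, habsθ, Complex.norm_real, Real.norm_eq_abs]; ring
  -- strict monotonicity of φ w r = |w - (1-r)z| - (ρ + r(1-ρ))
  have hmono : ∀ (w : ℂ) (r1 r2 : ℝ), r1 < r2 →
      ‖(w - (1-(r2:ℂ))*z)‖ - (ρ + r2*(1-ρ)) <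
      ‖(w - (1-(r1:ℂ))*z)‖ - (ρ + r1*(1-ρ)) := by
    intro w r1 r2 h
    have h1 : ‖(w - (1-(r2:ℂ))*z)‖ - ‖(w - (1-(r1:ℂ))*z)‖
        ≤ (r2 - r1) * ‖z‖ := by
      have h2 : ‖(w - (1-(r2:ℂ))*z)‖ - ‖(w - (1-(r1:ℂ))*z)‖
          ≤ ‖(w - (1-(r2:ℂ))*z) - (w - (1-(r1:ℂ))*z)‖ := norm_sub_norm_le _ _
      have h3 : (w - (1-(r2:ℂ))*z) - (w - (1-(r1:ℂ))*z) = ((r2 - r1 : ℝ):ℂ)*z := by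
        push_cast; ring
      rw [h3] at h2
      rw [norm_mul, Complex.norm_real, Real.norm_eq_abs, abs_of_pos (by linarith : (0:ℝ) < r2 - r1)] at h2
      exact h2
    nlinarith
  -- injectivity
  have hinj : Function.Injective f := by
    rintro ⟨θ1, r1⟩ ⟨θ2, r2⟩ hEq
    rw [hkey θ1 r1, hkey θ2 r2] at hEq
    have hr1 := r1.2; have hr2 := r2.2
    rw [Set.mem_Icc] at hr1 hr2
    set w := (1 - ((r1:ℝ):ℂ))*z + (((ρ + (r1:ℝ)*(1-ρ)) : ℝ):ℂ)*α*(θ1:ℂ) with hw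
    have hs1 : (0:ℝ) < ρ + (r1:ℝ)*(1-ρ) := by nlinarith [hr1.1, hr1.2]
    have hs2 : (0:ℝ) < ρ + (r2:ℝ)*(1-ρ) := by nlinarith [hr2.1, hr2.2]
    have e1 : w - (1-((r1:ℝ):ℂ))*z = (((ρ + (r1:ℝ)*(1-ρ)) : ℝ):ℂ)*α*(θ1:ℂ) := by
      rw [hw]; ring
    have e2 : w - (1-((r2:ℝ):ℂ))*z = (((ρ + (r2:ℝ)*(1-ρ)) : ℝ):ℂ)*α*(θ2:ℂ) := by
      rw [hEq]; ring
    have a1 : ‖(w - (1-((r1:ℝ):ℂ))*z)‖ = ρ + (r1:ℝ)*(1-ρ) := by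
      rw [e1, habs, abs_of_pos hs1]
    have a2 : ‖(w - (1-((r2:ℝ):ℂ))*z)‖ = ρ + (r2:ℝ)*(1-ρ) := by
      rw [e2, habs, abs_of_pos hs2]
    have hrr : (r1:ℝ) = (r2:ℝ) := by
      rcases lt_trichotomy (r1:ℝ) (r2:ℝ) with h | h | h
      · have := hmono w r1 r2 h; rw [a1, a2] at this; linarith
      · exact h
      · have := hmono w r2 r1 h; rw [a1, a2] at this; linarith
    have hrs : r1 = r2 := Subtype.ext hrr
    subst hrs
    have hθ : (θ1:ℂ) = (θ2:ℂ) := by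
      have h12 := e1.symm.trans e2
      have hne : (((ρ + (r1:ℝ)*(1-ρ)) : ℝ):ℂ)*α ≠ 0 := by
        apply mul_ne_zero _ hα0
        exact_mod_cast ne_of_gt hs1
      exact mul_left_cancel₀ hne h12
    exact Prod.ext (Subtype.ext hθ) rfl
  -- continuity
  have hf' : f = fun p : ↥(Metric.sphere (0:ℂ) 1) × ↥(Set.Icc (0:ℝ) 1) =>
      (1 - ((p.2 : ℝ) : ℂ)) * (z + (ρ:ℂ)*α*(p.1:ℂ)) + ((p.2:ℝ):ℂ)*α*(p.1:ℂ) := by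
    funext p; exact hf p.1 p.2
  have hcont : Continuous f := by
    rw [hf']; fun_prop
  refine ⟨(hcont.isClosedEmbedding hinj).isEmbedding, ?_⟩
  ext w
  simp only [Set.mem_range, Set.mem_setOf_eq]
  constructor
  · rintro ⟨⟨θ, r⟩, rfl⟩
    rw [hkey θ r]
    have hr := r.2; rw [Set.mem_Icc] at hr
    have hs : (0:ℝ) < ρ + (r:ℝ)*(1-ρ) := by nlinarith [hr.1, hr.2]
    constructor
    · calc ‖((1 - ((r:ℝ):ℂ))*z + (((ρ + (r:ℝ)*(1-ρ)):ℝ):ℂ)*α*(θ:ℂ))‖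
          ≤ ‖((1 - ((r:ℝ):ℂ))*z)‖ + ‖((((ρ + (r:ℝ)*(1-ρ)):ℝ):ℂ)*α*(θ:ℂ))‖ :=
            norm_add_le _ _
        _ = |1 - (r:ℝ)| * ‖z‖ + |ρ + (r:ℝ)*(1-ρ)| := by
            rw [habs, norm_mul]
            congr 2
            rw [show (1 - ((r:ℝ):ℂ)) = (((1 - (r:ℝ)):ℝ):ℂ) by push_cast; ring,
              Complex.norm_real, Real.norm_eq_abs]
        _ = (1 - (r:ℝ)) * ‖z‖ + (ρ + (r:ℝ)*(1-ρ)) := by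
            rw [abs_of_nonneg (by linarith : (0:ℝ) ≤ 1 - (r:ℝ)), abs_of_pos hs]
        _ ≤ 1 := by nlinarith [hr.1, hr.2]
    · have e : (1 - ((r:ℝ):ℂ))*z + (((ρ + (r:ℝ)*(1-ρ)):ℝ):ℂ)*α*(θ:ℂ) - z
          = (((ρ + (r:ℝ)*(1-ρ)):ℝ):ℂ)*α*(θ:ℂ) - ((r:ℝ):ℂ)*z := by ring
      rw [e]
      calc ρ ≤ (ρ + (r:ℝ)*(1-ρ)) - (r:ℝ) * ‖z‖ := by nlinarith [hr.1, hr.2]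
        _ = ‖((((ρ + (r:ℝ)*(1-ρ)):ℝ):ℂ)*α*(θ:ℂ))‖ - ‖(((r:ℝ):ℂ)*z)‖ := by
            rw [habs, abs_of_pos hs, norm_mul, Complex.norm_real, Real.norm_eq_abs,
              abs_of_nonneg hr.1]
        _ ≤ ‖((((ρ + (r:ℝ)*(1-ρ)):ℝ):ℂ)*α*(θ:ℂ) - ((r:ℝ):ℂ)*z)‖ := by
            exact
              norm_sub_norm_le ((((ρ + (r:ℝ)*(1-ρ)):ℝ):ℂ)*α*(θ:ℂ)) (((r:ℝ):ℂ)*z)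
  · rintro ⟨hw1, hw2⟩
    -- find r with |w - (1-r)z| = ρ + r(1-ρ) by IVT
    set φ : ℝ → ℝ := fun r => ‖(w - (1-(r:ℂ))*z)‖ - (ρ + r*(1-ρ)) with hφ
    have hφc : ContinuousOn φ (Set.Icc (0:ℝ) 1) := by
      apply Continuous.continuousOn
      rw [hφ]
      exact (continuous_norm.comp (by fun_prop)).sub (by fun_prop)
    have hφ0 : 0 ≤ φ 0 := by
      have h : φ 0 = ‖(w - z)‖ - ρ := by norm_num [hφ]
      linarith
    have hφ1 : φ 1 ≤ 0 := by
      have h : φ 1 = ‖w‖ - 1 := by norm_num [hφ]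
      linarith
    have h0mem : (0:ℝ) ∈ Set.Icc (φ 1) (φ 0) := ⟨hφ1, hφ0⟩
    obtain ⟨r, hrmem, hrval⟩ := intermediate_value_Icc' (by norm_num : (0:ℝ) ≤ 1) hφc h0mem
    rw [Set.mem_Icc] at hrmem
    have hs : (0:ℝ) < ρ + r*(1-ρ) := by nlinarith [hrmem.1, hrmem.2]
    have hsa : ‖(w - (1-(r:ℂ))*z)‖ = ρ + r*(1-ρ) := by
      have : φ r = 0 := hrval
      simp only [hφ] at this; linarith
    have hsne : (((ρ + r*(1-ρ)):ℝ):ℂ) * α ≠ 0 :=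
      mul_ne_zero (by exact_mod_cast ne_of_gt hs) hα0
    set θ0 : ℂ := (w - (1-(r:ℂ))*z) / ((((ρ + r*(1-ρ)):ℝ):ℂ) * α) with hθ0
    have hθ0abs : ‖θ0‖ = 1 := by
      rw [hθ0, norm_div, hsa, norm_mul, hα, Complex.norm_real, Real.norm_eq_abs, abs_of_pos hs]
      field_simp
    have hθ0mem : θ0 ∈ Metric.sphere (0:ℂ) 1 := by
      rw [mem_sphere_zero_iff_norm]; exact hθ0abs
    refine ⟨(⟨θ0, hθ0mem⟩, ⟨r, Set.mem_Icc.mpr hrmem⟩), ?_⟩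
    rw [hkey]
    simp only
    rw [hθ0, mul_assoc]
    rw [show (((ρ + r*(1-ρ)):ℝ):ℂ) * (α * ((w - (1-(r:ℂ))*z) / ((((ρ + r*(1-ρ)):ℝ):ℂ) * α)))
        = ((((ρ + r*(1-ρ)):ℝ):ℂ) * α) * ((w - (1-(r:ℂ))*z) / ((((ρ + r*(1-ρ)):ℝ):ℂ) * α)) by ring,
      mul_div_cancel₀ _ hsne]
    ring
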